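/- Let m ∈ ℝ, v > 0, let γ be the Gaussian probability measure on ℝ with mean m and variance v, and let f : ℝ → ℂ be Lebesgue integrable such that its Fourier transform 𝔉f is also Lebesgue integrable. Then for every x ∈ ℝ, ∫_ℝ f(x + y) dγ(y) = (1/(2π)) ∫_ℝ e^{iνx} · 𝔉f(ν) · exp(imν − vν²/2) dν. -/

import Mathlib

open MeasureTheory ProbabilityTheory Real Complex

/-- Fourier (convolution) representation of the Gaussian smoothing step: if `f` and its
Fourier transform `𝔉f(ν) = ∫ e^{−iνy} f(y) dy` are integrable, then for the Gaussian
measure `γ` with mean `m` and variance `v > 0`,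
`∫ f(x+y) dγ(y) = (1/(2π)) ∫ e^{iνx} 𝔉f(ν) exp(imν − vν²/2) dν`. -/
theorem stmt_2 (m : ℝ) (v : NNReal) (hv : 0 < v) (f : ℝ → ℂ)
    (hf : Integrable f)
    (hFf : Integrable (fun ν : ℝ => ∫ y : ℝ, Complex.exp (-Complex.I * ν * y) * f y)) :
    ∀ x : ℝ,
      ∫ y, f (x + y) ∂(gaussianReal m v)
        = (1 / (2 * Real.pi) : ℂ) *
            ∫ ν : ℝ, Complex.exp (Complex.I * ν * x) *
              (∫ y : ℝ, Complex.exp (-Complex.I * ν * y) * f y) *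
              Complex.exp (Complex.I * m * ν - (v : ℂ) * ν ^ 2 / 2) := by
  intro x
  have hv0 : (v : ℝ) ≠ 0 := by exact_mod_cast hv.ne'
  have hvpos : (0:ℝ) < v := by exact_mod_cast hv
  -- LHS as a Lebesgue integral against the density
  have hmeas : gaussianReal m v
      = volume.withDensity (fun y => ((gaussianPDFReal m v y).toNNReal : ENNReal)) := by
    rw [gaussianReal_of_var_ne_zero m hv.ne']; rfl
  have hL : ∫ y, f (x + y) ∂(gaussianReal m v)
      = ∫ z, (gaussianPDFReal m v (z - x) : ℂ) * f z := by
    rw [hmeas, integral_withDensity_eq_integral_smul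
      ((measurable_gaussianPDFReal m v).real_toNNReal) (fun y => f (x + y))]
    calc ∫ y, (gaussianPDFReal m v y).toNNReal • f (x + y)
        = ∫ y, (gaussianPDFReal m v ((x + y) - x) : ℂ) * f (x + y) := by
          congr 1; ext y
          rw [NNReal.smul_def, Real.coe_toNNReal _ (gaussianPDFReal_nonneg m v y)]
          simp [Complex.real_smul]
      _ = ∫ z, (gaussianPDFReal m v (z - x) : ℂ) * f z :=
          integral_add_left_eq_self (fun z => (gaussianPDFReal m v (z - x) : ℂ) * f z) x
  rw [hL]
  -- the double-integral integrand
  set G : ℝ → ℝ → ℂ := fun ν y => Complex.exp (Complex.I * ν * x) *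
      (Complex.exp (-Complex.I * ν * y) * f y) *
      Complex.exp (Complex.I * m * ν - (v : ℂ) * ν ^ 2 / 2) with hG
  have hGnorm : ∀ ν y : ℝ, ‖G ν y‖ = Real.exp (-((v:ℝ)/2) * ν ^ 2) * ‖f y‖ := by
    intro ν y
    simp only [hG, norm_mul, Complex.norm_exp]
    have h1 : (Complex.I * ν * x).re = 0 := by simp
    have h2 : (-Complex.I * ν * y).re = 0 := by simp
    have h3 : (Complex.I * m * ν - (v : ℂ) * ν ^ 2 / 2).re = -((v:ℝ)/2) * ν ^ 2 := by
      simp [Complex.sub_re, Complex.div_re, ← Complex.ofReal_pow]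
      ring
    rw [h1, h2, h3]
    simp [mul_comm, mul_assoc, mul_left_comm]
  have hGint : Integrable (Function.uncurry G) (volume.prod volume) := by
    have hbound : Integrable (fun p : ℝ × ℝ =>
        Real.exp (-((v:ℝ)/2) * p.1 ^ 2) * ‖f p.2‖) (volume.prod volume) :=
      (integrable_exp_neg_mul_sq (by positivity)).mul_prod hf.norm
    refine hbound.mono' ?_ ?_
    · apply AEStronglyMeasurable.mul
      apply AEStronglyMeasurable.mul
      · exact (Complex.measurable_exp.comp (by fun_prop)).aestronglyMeasurable
      · exact ((Complex.measurable_exp.comp (by fun_prop)).aestronglyMeasurable).mul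
          (hf.1.comp_snd)
      · exact (Complex.measurable_exp.comp (by fun_prop)).aestronglyMeasurable
    · filter_upwards with p
      rw [Function.uncurry, hGnorm p.1 p.2]
  -- rewrite the RHS integrand as an inner integral and swap
  have hR : ∫ ν : ℝ, Complex.exp (Complex.I * ν * x) *
        (∫ y : ℝ, Complex.exp (-Complex.I * ν * y) * f y) *
        Complex.exp (Complex.I * m * ν - (v : ℂ) * ν ^ 2 / 2)
      = ∫ y : ℝ, ∫ ν : ℝ, G ν y := by
    rw [← integral_integral_swap hGint]
    congr 1; ext ν
    rw [hG]
    simp only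
    rw [MeasureTheory.integral_mul_const, MeasureTheory.integral_const_mul]
  rw [hR]
  -- compute the inner Gaussian integral
  have hb : (-((v:ℂ)/2)).re < 0 := by
    simp only [Complex.neg_re, Complex.div_re]
    simp
    positivity
  have hinner : ∀ y : ℝ, ∫ ν : ℝ, G ν y
      = (((Real.pi / ((v:ℝ)/2)) ^ ((1:ℝ)/2) : ℝ) : ℂ) *
        Complex.exp (-(((x + m - y : ℝ) : ℂ)) ^ 2 / (2 * v)) * f y := by
    intro y
    have hexp : ∀ ν : ℝ, G ν y =
        Complex.exp ((-((v:ℂ)/2)) * ν ^ 2 + (Complex.I * (x + m - y)) * ν + 0) * f y := by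
      intro ν
      have h0 : G ν y = (Complex.exp (Complex.I * ν * x) * Complex.exp (-Complex.I * ν * y)
          * Complex.exp (Complex.I * m * ν - (v : ℂ) * ν ^ 2 / 2)) * f y := by
        rw [hG]; ring
      rw [h0, ← Complex.exp_add, ← Complex.exp_add]
      congr 2
      push_cast
      ring
    simp_rw [hexp]
    rw [MeasureTheory.integral_mul_const, integral_cexp_quadratic hb]
    congr 2
    · have hbase : ((Real.pi : ℂ) / -(-((v:ℂ)/2))) = ((Real.pi / ((v:ℝ)/2) : ℝ) : ℂ) := by
        push_cast; ring
      rw [hbase, show (1/2 : ℂ) = ((1/2 : ℝ) : ℂ) by norm_num,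
        ← Complex.ofReal_cpow (by positivity)]
    · congr 1
      have h2 : (Complex.I * ((x:ℂ) + m - y)) ^ 2 = -(((x + m - y : ℝ) : ℂ)) ^ 2 := by
        rw [mul_pow, Complex.I_sq]; push_cast; ring
      rw [h2]
      have hvc : (v : ℂ) ≠ 0 := by exact_mod_cast hv0
      field_simp
      ring
  simp_rw [hinner]
  rw [← MeasureTheory.integral_const_mul]
  congr 1; ext y
  -- final pointwise identity
  have hc' : (Real.pi/((v:ℝ)/2)) ^ ((1:ℝ)/2)
      = 2*Real.pi*(Real.sqrt (2*Real.pi*(v:ℝ)))⁻¹ := by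
    rw [← Real.sqrt_eq_rpow]
    have h2 : Real.pi / ((v:ℝ)/2) = (2*Real.pi*(v:ℝ))⁻¹ * (2*Real.pi)^2 := by
      field_simp
    rw [h2, Real.sqrt_mul (by positivity), Real.sqrt_sq (by positivity), Real.sqrt_inv]
    ring
  have hexp2 : Complex.exp (-(((x + m - y : ℝ) : ℂ)) ^ 2 / (2 * v))
      = ((Real.exp (-(y - x - m)^2/(2*(v:ℝ))) : ℝ) : ℂ) := by
    rw [Complex.ofReal_exp]
    congr 1
    push_cast
    ring
  rw [hexp2]
  simp only [gaussianPDFReal]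
  rw [hc']
  push_cast
  have hpi : ((Real.pi : ℂ)) ≠ 0 := by exact_mod_cast Real.pi_ne_zero
  have hsq : ((Real.sqrt (2*Real.pi*(v:ℝ)) : ℂ)) ≠ 0 := by
    exact_mod_cast (Real.sqrt_ne_zero'.mpr (by positivity))
  ring_nf
  rw [mul_inv_cancel_right₀ hpi]
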